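/- Let 0 < α, β, γ ≤ 1 with α_k ∈ (0,α), β_j ∈ (0,β), a, b > 0, a_k, b_j ≥ 0, and suppose α + γ + Σ_{k=1}^K α_k ≤ 1 and β ≤ γ. Let θ ∈ (π/2, π). Then for every z with 0 < |arg z| < θ, writing η(z) = z^γ (1 + a z^α + Σ_k a_k z^{α_k})(1 + b z^β + Σ_j b_j z^{β_j})^{-1} (principal branches), one has |arg η(z)| ≤ (α + γ + Σ_{k=1}^K α_k)·|arg z| ≤ θ; in particular η(z) lies in the sector Σ_θ = {w ∈ ℂ \ {0} : |arg w| < θ}. -/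

import Mathlib

open Complex

private lemma cpow_polar {z : ℂ} (hz : z ≠ 0) (c : ℝ) :
    z ^ (c : ℂ) = ((Real.exp (c * Real.log (‖z‖)) : ℝ) : ℂ) *
      Complex.exp (((c * z.arg : ℝ) : ℂ) * I) := by
  have hlog : Complex.log z = ((Real.log (‖z‖) : ℝ) : ℂ) + (z.arg : ℂ) * I := by
    apply Complex.ext <;> simp [Complex.log_re, Complex.log_im]
  rw [Complex.cpow_def_of_ne_zero hz, hlog, add_mul, Complex.exp_add]
  congr 1
  · rw [← Complex.ofReal_mul, Complex.ofReal_exp, mul_comm]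
  · congr 1
    push_cast
    ring

private lemma im_polar (r t : ℝ) :
    (((r : ℝ) : ℂ) * Complex.exp (((t : ℝ) : ℂ) * I)).im = r * Real.sin t := by
  rw [Complex.exp_mul_I]
  simp [Complex.mul_im, Complex.sin_ofReal_re]

private lemma term_im (c R t : ℝ) :
    ((c : ℂ) * (((R : ℝ) : ℂ) * Complex.exp (((t : ℝ) : ℂ) * I))).im = c * R * Real.sin t := by
  rw [← mul_assoc, ← Complex.ofReal_mul, im_polar]

private lemma polar_mul_exp (c R t s : ℝ) :
    (c : ℂ) * (((R : ℝ) : ℂ) * Complex.exp (((t : ℝ) : ℂ) * I)) * Complex.exp (((s : ℝ) : ℂ) * I)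
    = ((c * R : ℝ) : ℂ) * Complex.exp ((((t + s : ℝ)) : ℂ) * I) := by
  rw [mul_assoc, mul_assoc, ← Complex.exp_add]
  push_cast
  ring

private lemma sector_bound {w : ℂ} {ψ : ℝ} (hψ0 : 0 < ψ) (hψ : ψ < Real.pi) (him : 0 < w.im)
    (h : (w * Complex.exp ((((-ψ : ℝ)) : ℂ) * I)).im ≤ 0) : 0 < w.arg ∧ w.arg ≤ ψ := by
  have hw : w ≠ 0 := fun h0 => by simp [h0] at him
  have harg0 : 0 < w.arg := by
    rcases (Complex.arg_nonneg_iff.2 him.le).lt_or_eq with h' | h'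
    · exact h'
    · exact absurd (Complex.arg_eq_zero_iff.1 h'.symm).2 him.ne'
  refine ⟨harg0, ?_⟩
  by_contra hlt
  push_neg at hlt
  have key : (w * Complex.exp ((((-ψ : ℝ)) : ℂ) * I)).im
      = ‖w‖ * Real.sin (w.arg - ψ) := by
    conv_lhs => rw [← Complex.norm_mul_exp_arg_mul_I w]
    rw [mul_assoc, ← Complex.exp_add]
    have h2 : (w.arg : ℂ) * I + ((-ψ : ℝ) : ℂ) * I = ((w.arg - ψ : ℝ) : ℂ) * I := by
      push_cast; ring
    rw [h2, im_polar]
  rw [key] at h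
  have hpos : 0 < Real.sin (w.arg - ψ) :=
    Real.sin_pos_of_pos_of_lt_pi (by linarith) (by have := Complex.arg_le_pi w; linarith)
  nlinarith [norm_pos_iff.mpr hw]

private lemma factor_im (K : ℕ) (α a : ℝ) (αk ak : Fin K → ℝ) (hα : 0 < α)
    (hαk : ∀ k, 0 < αk k ∧ αk k < α) (ha : 0 < a) (hak : ∀ k, 0 ≤ ak k)
    {z : ℂ} (hz : z ≠ 0) (hφ : 0 < z.arg) (hφπ : α * z.arg < Real.pi) :
    0 < (1 + (a : ℂ) * z ^ (α : ℂ) + ∑ k, (ak k : ℂ) * z ^ (αk k : ℂ)).im ∧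
    ((1 + (a : ℂ) * z ^ (α : ℂ) + ∑ k, (ak k : ℂ) * z ^ (αk k : ℂ)) *
      Complex.exp ((((-(α * z.arg) : ℝ)) : ℂ) * I)).im ≤ 0 := by
  have hpol : ∀ c : ℝ, z ^ (c:ℂ) = ((Real.exp (c * Real.log (‖z‖)) : ℝ):ℂ)
      * Complex.exp (((c * z.arg : ℝ):ℂ) * I) := fun c => cpow_polar hz c
  set φ := z.arg with hφdef
  set R : ℝ → ℝ := fun c => Real.exp (c * Real.log (‖z‖)) with hRdef
  have hRpos : ∀ c, 0 < R c := fun c => Real.exp_pos _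
  constructor
  · have : (1 + (a : ℂ) * z ^ (α : ℂ) + ∑ k, (ak k : ℂ) * z ^ (αk k : ℂ)).im
        = a * R α * Real.sin (α * φ) + ∑ k, ak k * R (αk k) * Real.sin (αk k * φ) := by
      simp only [hpol, Complex.add_im, Complex.one_im, term_im, Complex.im_sum, zero_add]
      rfl
    rw [this]
    have h1 : 0 < a * R α * Real.sin (α * φ) := by
      have := Real.sin_pos_of_pos_of_lt_pi (mul_pos hα hφ) hφπ
      have := hRpos α
      positivity
    have h2 : 0 ≤ ∑ k, ak k * R (αk k) * Real.sin (αk k * φ) := by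
      apply Finset.sum_nonneg
      intro k _
      have hs : 0 ≤ Real.sin (αk k * φ) := by
        apply le_of_lt
        apply Real.sin_pos_of_pos_of_lt_pi (mul_pos (hαk k).1 hφ)
        have : αk k * φ < α * φ := mul_lt_mul_of_pos_right (hαk k).2 hφ
        linarith
      have h3 := (hRpos (αk k)).le
      have h4 := hak k
      positivity
    linarith
  · have : ((1 + (a : ℂ) * z ^ (α : ℂ) + ∑ k, (ak k : ℂ) * z ^ (αk k : ℂ)) *
        Complex.exp ((((-(α * φ) : ℝ)) : ℂ) * I)).im
        = Real.sin (-(α * φ)) + a * R α * Real.sin (α * φ + -(α * φ))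
          + ∑ k, ak k * R (αk k) * Real.sin (αk k * φ + -(α * φ)) := by
      rw [add_mul, add_mul, one_mul, Finset.sum_mul]
      simp only [hpol, polar_mul_exp, Complex.add_im, term_im, Complex.im_sum, im_polar]
      congr 1
      congr 1
      · simpa using im_polar 1 (-(α * φ))
    rw [this]
    have h0 : Real.sin (-(α * φ)) ≤ 0 := by
      rw [Real.sin_neg]
      have := Real.sin_pos_of_pos_of_lt_pi (mul_pos hα hφ) hφπ
      linarith
    have h1 : a * R α * Real.sin (α * φ + -(α * φ)) = 0 := by simp
    have h2 : ∑ k, ak k * R (αk k) * Real.sin (αk k * φ + -(α * φ)) ≤ 0 := by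
      apply Finset.sum_nonpos
      intro k _
      have hs : Real.sin (αk k * φ + -(α * φ)) ≤ 0 := by
        apply Real.sin_nonpos_of_nonpos_of_neg_pi_le
        · nlinarith [(hαk k).2, hφ]
        · nlinarith [(hαk k).1, hφ, hφπ, mul_pos (hαk k).1 hφ]
      exact mul_nonpos_of_nonneg_of_nonpos (mul_nonneg (hak k) (hRpos _).le) hs
    linarith

private lemma arg_three (r1 r2 r3 t1 t2 t3 : ℝ) (h1 : 0 < r1) (h2 : 0 < r2) (h3 : 0 < r3)
    (ht : t1 + t2 + t3 ∈ Set.Ioc (-Real.pi) Real.pi) :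
    ((((r1 : ℝ) : ℂ) * Complex.exp (((t1 : ℝ) : ℂ) * I)) *
      ((((r2 : ℝ) : ℂ)) * Complex.exp (((t2 : ℝ) : ℂ) * I)) *
      ((((r3 : ℝ) : ℂ)) * Complex.exp (((t3 : ℝ) : ℂ) * I))).arg = t1 + t2 + t3 := by
  have e : ((((r1 : ℝ) : ℂ) * Complex.exp (((t1 : ℝ) : ℂ) * I)) *
      ((((r2 : ℝ) : ℂ)) * Complex.exp (((t2 : ℝ) : ℂ) * I)) *
      ((((r3 : ℝ) : ℂ)) * Complex.exp (((t3 : ℝ) : ℂ) * I)))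
      = (((r1 * r2 * r3 : ℝ) : ℂ)) * Complex.exp (((t1 + t2 + t3 : ℝ) : ℂ) * I) := by
    have h : ((t1 + t2 + t3 : ℝ) : ℂ) * I = (t1 : ℂ) * I + ((t2 : ℂ) * I + (t3 : ℂ) * I) := by
      push_cast; ring
    rw [h, Complex.exp_add, Complex.exp_add]
    push_cast
    ring
  rw [e, Complex.exp_mul_I]
  exact Complex.arg_mul_cos_add_sin_mul_I (by positivity) ht

private lemma key_pos (K J : ℕ) (α β γ a b : ℝ) (αk : Fin K → ℝ) (βj : Fin J → ℝ)
    (ak : Fin K → ℝ) (bj : Fin J → ℝ)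
    (hα : 0 < α) (hβ : 0 < β) (hγ : 0 < γ) (hγ1 : γ ≤ 1)
    (hαk : ∀ k, 0 < αk k ∧ αk k < α) (hβj : ∀ j, 0 < βj j ∧ βj j < β)
    (ha : 0 < a) (hb : 0 < b) (hak : ∀ k, 0 ≤ ak k) (hbj : ∀ j, 0 ≤ bj j)
    (hαγ : α + γ ≤ 1) (hβγ : β ≤ γ)
    (z : ℂ) (hφ : 0 < z.arg) (hφπ : z.arg < Real.pi) :
    (z ^ (γ : ℂ) * (1 + (a : ℂ) * z ^ (α : ℂ) + ∑ k, (ak k : ℂ) * z ^ (αk k : ℂ)) *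
        (1 + (b : ℂ) * z ^ (β : ℂ) + ∑ j, (bj j : ℂ) * z ^ (βj j : ℂ))⁻¹) ≠ 0 ∧
    0 < (z ^ (γ : ℂ) * (1 + (a : ℂ) * z ^ (α : ℂ) + ∑ k, (ak k : ℂ) * z ^ (αk k : ℂ)) *
        (1 + (b : ℂ) * z ^ (β : ℂ) + ∑ j, (bj j : ℂ) * z ^ (βj j : ℂ))⁻¹).arg ∧
    (z ^ (γ : ℂ) * (1 + (a : ℂ) * z ^ (α : ℂ) + ∑ k, (ak k : ℂ) * z ^ (αk k : ℂ)) *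
        (1 + (b : ℂ) * z ^ (β : ℂ) + ∑ j, (bj j : ℂ) * z ^ (βj j : ℂ))⁻¹).arg
      ≤ (α + γ) * z.arg := by
  have hz : z ≠ 0 := by
    intro h; rw [h] at hφ; simp [Complex.arg_zero] at hφ
  set φ := z.arg with hφdef
  set P := 1 + (a : ℂ) * z ^ (α : ℂ) + ∑ k, (ak k : ℂ) * z ^ (αk k : ℂ) with hPdef
  set Q := 1 + (b : ℂ) * z ^ (β : ℂ) + ∑ j, (bj j : ℂ) * z ^ (βj j : ℂ) with hQdef
  have hαφπ : α * φ < Real.pi := by nlinarith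
  have hβφπ : β * φ < Real.pi := by nlinarith
  obtain ⟨hPim, hPmul⟩ := factor_im K α a αk ak hα hαk ha hak hz hφ hαφπ
  obtain ⟨hQim, hQmul⟩ := factor_im J β b βj bj hβ hβj hb hbj hz hφ hβφπ
  obtain ⟨hPa0, hPa⟩ := sector_bound (mul_pos hα hφ) hαφπ hPim hPmul
  obtain ⟨hQa0, hQa⟩ := sector_bound (mul_pos hβ hφ) hβφπ hQim hQmul
  rw [← hPdef] at hPim hPa0 hPa
  rw [← hQdef] at hQim hQa0 hQa
  have hP0 : P ≠ 0 := fun h => by rw [h] at hPim; simp at hPim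
  have hQ0 : Q ≠ 0 := fun h => by rw [h] at hQim; simp at hQim
  have hQarg_ne : Q.arg ≠ Real.pi := by
    intro h; rw [h] at hQa; linarith
  have hQinv : (Q⁻¹).arg = -Q.arg := by
    rw [Complex.arg_inv, if_neg hQarg_ne]
  have hzγ0 : z ^ (γ : ℂ) ≠ 0 := by
    rw [cpow_polar hz γ]
    exact mul_ne_zero (by exact_mod_cast (Real.exp_pos _).ne') (Complex.exp_ne_zero _)
  have hηne : z ^ (γ : ℂ) * P * Q⁻¹ ≠ 0 :=
    mul_ne_zero (mul_ne_zero hzγ0 hP0) (inv_ne_zero hQ0)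
  have hs : γ * φ + P.arg + (Q⁻¹).arg ∈ Set.Ioc (-Real.pi) Real.pi := by
    rw [hQinv]
    constructor
    · nlinarith [Real.pi_pos]
    · nlinarith
  have harg : (z ^ (γ : ℂ) * P * Q⁻¹).arg = γ * φ + P.arg + (Q⁻¹).arg := by
    conv_lhs =>
      rw [cpow_polar hz γ, ← Complex.norm_mul_exp_arg_mul_I P,
        ← Complex.norm_mul_exp_arg_mul_I Q⁻¹]
    exact arg_three _ _ _ _ _ _ (Real.exp_pos _) (norm_pos_iff.mpr hP0)
      (norm_pos_iff.mpr (inv_ne_zero hQ0)) hs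
  refine ⟨hηne, ?_, ?_⟩
  · rw [harg, hQinv]; nlinarith
  · rw [harg, hQinv]; nlinarith

theorem stmt_4 (K J : ℕ) (α β γ a b : ℝ) (αk : Fin K → ℝ) (βj : Fin J → ℝ)
    (ak : Fin K → ℝ) (bj : Fin J → ℝ)
    (hα : 0 < α) (hα1 : α ≤ 1) (hβ : 0 < β) (hβ1 : β ≤ 1) (hγ : 0 < γ) (hγ1 : γ ≤ 1)
    (hαk : ∀ k, 0 < αk k ∧ αk k < α) (hβj : ∀ j, 0 < βj j ∧ βj j < β)
    (ha : 0 < a) (hb : 0 < b) (hak : ∀ k, 0 ≤ ak k) (hbj : ∀ j, 0 ≤ bj j)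
    (hsum : α + γ + ∑ k, αk k ≤ 1) (hβγ : β ≤ γ)
    (θ : ℝ) (hθ : Real.pi / 2 < θ) (hθπ : θ < Real.pi)
    (z : ℂ) (hz0 : 0 < |z.arg|) (hzθ : |z.arg| < θ) :
    |(z ^ (γ : ℂ) * (1 + (a : ℂ) * z ^ (α : ℂ) + ∑ k, (ak k : ℂ) * z ^ (αk k : ℂ)) *
        (1 + (b : ℂ) * z ^ (β : ℂ) + ∑ j, (bj j : ℂ) * z ^ (βj j : ℂ))⁻¹).arg| ≤
      (α + γ + ∑ k, αk k) * |z.arg| ∧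
    (α + γ + ∑ k, αk k) * |z.arg| ≤ θ ∧
    (z ^ (γ : ℂ) * (1 + (a : ℂ) * z ^ (α : ℂ) + ∑ k, (ak k : ℂ) * z ^ (αk k : ℂ)) *
        (1 + (b : ℂ) * z ^ (β : ℂ) + ∑ j, (bj j : ℂ) * z ^ (βj j : ℂ))⁻¹) ≠ 0 ∧
    |(z ^ (γ : ℂ) * (1 + (a : ℂ) * z ^ (α : ℂ) + ∑ k, (ak k : ℂ) * z ^ (αk k : ℂ)) *
        (1 + (b : ℂ) * z ^ (β : ℂ) + ∑ j, (bj j : ℂ) * z ^ (βj j : ℂ))⁻¹).arg| < θ := by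
  have hSnn : 0 ≤ ∑ k, αk k := Finset.sum_nonneg fun k _ => (hαk k).1.le
  have hαγ : α + γ ≤ 1 := by linarith
  have hsum0 : 0 ≤ α + γ + ∑ k, αk k := by positivity
  have h2 : (α + γ + ∑ k, αk k) * |z.arg| ≤ θ := by
    have := mul_le_mul_of_nonneg_right hsum (abs_nonneg z.arg)
    rw [one_mul] at this
    linarith
  have main : |(z ^ (γ : ℂ) * (1 + (a : ℂ) * z ^ (α : ℂ) + ∑ k, (ak k : ℂ) * z ^ (αk k : ℂ)) *
        (1 + (b : ℂ) * z ^ (β : ℂ) + ∑ j, (bj j : ℂ) * z ^ (βj j : ℂ))⁻¹).arg|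
        ≤ (α + γ) * |z.arg| ∧
      (z ^ (γ : ℂ) * (1 + (a : ℂ) * z ^ (α : ℂ) + ∑ k, (ak k : ℂ) * z ^ (αk k : ℂ)) *
        (1 + (b : ℂ) * z ^ (β : ℂ) + ∑ j, (bj j : ℂ) * z ^ (βj j : ℂ))⁻¹) ≠ 0 := by
    rcases lt_trichotomy z.arg 0 with hneg | hzero | hpos
    · -- conjugate case
      have hzπ : z.arg ≠ Real.pi := by
        intro h; rw [h] at hneg; linarith [Real.pi_pos]
      set w := (starRingEnd ℂ) z with hwdef
      have hwarg : w.arg = -z.arg := by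
        rw [hwdef, Complex.arg_conj, if_neg hzπ]
      have hwpos : 0 < w.arg := by rw [hwarg]; linarith
      have hwπ : w.arg < Real.pi := by
        rw [hwarg]
        have : |z.arg| = -z.arg := abs_of_neg hneg
        linarith
      have hc : ∀ c : ℝ, w ^ (c : ℂ) = (starRingEnd ℂ) (z ^ (c : ℂ)) := by
        intro c
        have := Complex.conj_cpow z (c : ℂ) hzπ
        rwa [Complex.conj_ofReal] at this
      have hη : w ^ (γ : ℂ) * (1 + (a : ℂ) * w ^ (α : ℂ) + ∑ k, (ak k : ℂ) * w ^ (αk k : ℂ)) *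
          (1 + (b : ℂ) * w ^ (β : ℂ) + ∑ j, (bj j : ℂ) * w ^ (βj j : ℂ))⁻¹
          = (starRingEnd ℂ)
            (z ^ (γ : ℂ) * (1 + (a : ℂ) * z ^ (α : ℂ) + ∑ k, (ak k : ℂ) * z ^ (αk k : ℂ)) *
            (1 + (b : ℂ) * z ^ (β : ℂ) + ∑ j, (bj j : ℂ) * z ^ (βj j : ℂ))⁻¹) := by
        simp only [hc, map_add, map_mul, map_one, map_sum, map_inv₀, Complex.conj_ofReal]
      obtain ⟨hne, hpos', hle'⟩ := key_pos K J α β γ a b αk βj ak bj hα hβ hγ hγ1 hαk hβj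
        ha hb hak hbj hαγ hβγ w hwpos hwπ
      rw [hη] at hne hpos' hle'
      set u := z ^ (γ : ℂ) * (1 + (a : ℂ) * z ^ (α : ℂ) + ∑ k, (ak k : ℂ) * z ^ (αk k : ℂ)) *
          (1 + (b : ℂ) * z ^ (β : ℂ) + ∑ j, (bj j : ℂ) * z ^ (βj j : ℂ))⁻¹ with hudef
      have hune : u ≠ 0 := fun h => hne (by rw [h]; simp)
      have huπ : u.arg ≠ Real.pi := by
        intro h
        have hc' : ((starRingEnd ℂ) u).arg = Real.pi := by
          rw [Complex.arg_conj, if_pos h]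
        rw [hc'] at hle'
        rw [hwarg] at hle'
        have habs : -z.arg = |z.arg| := (abs_of_neg hneg).symm
        nlinarith [Real.pi_pos, hzθ, hθπ, abs_nonneg z.arg]
      have hconj : ((starRingEnd ℂ) u).arg = -u.arg := by
        rw [Complex.arg_conj, if_neg huπ]
      rw [hconj] at hpos' hle'
      rw [hwarg] at hle'
      constructor
      · have : |u.arg| = -u.arg := abs_of_neg (by linarith)
        rw [this, abs_of_neg hneg]
        linarith
      · exact hune
    · exfalso; rw [hzero] at hz0; simp at hz0
    · have hzπ : z.arg < Real.pi := by
        rw [abs_of_pos hpos] at hzθ; linarith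
      obtain ⟨hne, hpos', hle'⟩ := key_pos K J α β γ a b αk βj ak bj hα hβ hγ hγ1 hαk hβj
        ha hb hak hbj hαγ hβγ z hpos hzπ
      refine ⟨?_, hne⟩
      rw [abs_of_pos hpos']
      rw [abs_of_pos hpos]
      exact hle'
  obtain ⟨hmain, hne⟩ := main
  have h1 : |(z ^ (γ : ℂ) * (1 + (a : ℂ) * z ^ (α : ℂ) + ∑ k, (ak k : ℂ) * z ^ (αk k : ℂ)) *
        (1 + (b : ℂ) * z ^ (β : ℂ) + ∑ j, (bj j : ℂ) * z ^ (βj j : ℂ))⁻¹).arg|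
        ≤ (α + γ + ∑ k, αk k) * |z.arg| := by
    have : (α + γ) * |z.arg| ≤ (α + γ + ∑ k, αk k) * |z.arg| := by
      apply mul_le_mul_of_nonneg_right _ (abs_nonneg _)
      linarith
    linarith
  have h2' : (α + γ + ∑ k, αk k) * |z.arg| ≤ |z.arg| := by
    have := mul_le_mul_of_nonneg_right hsum (abs_nonneg z.arg)
    rw [one_mul] at this
    exact this
  exact ⟨h1, h2, hne, lt_of_le_of_lt (le_trans h1 h2') hzθ⟩
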